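/- Let F = (f_{ij}) be an α×β matrix with strictly positive entries, p, q stochastic vectors with positive entries, and T = K_1 ∘ I_2 ∘ K_2 ∘ I_1 : ℝ_+^α → ℝ_+^α as defined by I_1(x)_i = 1/x_i, K_2(x)_j = Σ_i f_{ij} x_i p_i, I_2(y)_j = 1/y_j, K_1(y)_i = Σ_j f_{ij} y_j q_j. Then T has a fixed point x_T ∈ ℝ_+^α, unique up to multiplication by a positive scalar. -/

import Mathlib

open Real Finset Topology

set_option linter.unusedSectionVars false

section Aux

variable {α β : ℕ} [NeZero α] [NeZero β]

/-- `Smap F p x j = ∑ i, F i j * (x i)⁻¹ * p i`. -/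
noncomputable def Smap (F : Fin α → Fin β → ℝ) (p : Fin α → ℝ) (x : Fin α → ℝ)
    (j : Fin β) : ℝ :=
  ∑ i, F i j * (x i)⁻¹ * p i

/-- The explicit formula for the map `T`. -/
noncomputable def Tmap (F : Fin α → Fin β → ℝ) (p : Fin α → ℝ) (q : Fin β → ℝ)
    (x : Fin α → ℝ) (i : Fin α) : ℝ :=
  ∑ j, F i j * (Smap F p x j)⁻¹ * q j

/-- The potential whose minimizers are fixed points of `T`. -/
noncomputable def Phi (F : Fin α → Fin β → ℝ) (p : Fin α → ℝ) (q : Fin β → ℝ)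
    (x : Fin α → ℝ) : ℝ :=
  (∑ j, q j * Real.log (Smap F p x j)) + ∑ i, p i * Real.log (x i)

variable {F : Fin α → Fin β → ℝ} {p : Fin α → ℝ} {q : Fin β → ℝ}

lemma Smap_pos (hF : ∀ i j, 0 < F i j) (hp : ∀ i, 0 < p i)
    {x : Fin α → ℝ} (hx : ∀ i, 0 < x i) (j : Fin β) : 0 < Smap F p x j := by
  refine Finset.sum_pos (fun i _ => ?_) univ_nonempty
  have h1 := hF i j; have h2 := hx i; have h3 := hp i
  positivity

/-- Scale invariance of `Phi`. -/
lemma Phi_smul (hF : ∀ i j, 0 < F i j) (hp : ∀ i, 0 < p i) (hp1 : ∑ i, p i = 1)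
    (hq : ∀ j, 0 < q j) (hq1 : ∑ j, q j = 1)
    {x : Fin α → ℝ} (hx : ∀ i, 0 < x i) {c : ℝ} (hc : 0 < c) :
    Phi F p q (fun i => c * x i) = Phi F p q x := by
  have hS : ∀ j, Smap F p (fun i => c * x i) j = c⁻¹ * Smap F p x j := by
    intro j
    simp only [Smap, Finset.mul_sum]
    refine Finset.sum_congr rfl fun i _ => ?_
    rw [mul_inv]; ring
  have h1 : ∀ j, Real.log (Smap F p (fun i => c * x i) j)
      = Real.log c⁻¹ + Real.log (Smap F p x j) := by
    intro j
    rw [hS, Real.log_mul (by positivity) (Smap_pos hF hp hx j).ne']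
  have h2 : ∀ i, Real.log (c * x i) = Real.log c + Real.log (x i) := fun i =>
    Real.log_mul hc.ne' (hx i).ne'
  simp only [Phi, h1, h2, mul_add, Finset.sum_add_distrib, ← Finset.sum_mul, hp1, hq1,
    one_mul, Real.log_inv]
  ring

/-- The key fixed point property from a local minimum of `Phi`. -/
lemma Tmap_fixed_of_localMin (hF : ∀ i j, 0 < F i j) (hp : ∀ i, 0 < p i)
    (hq : ∀ j, 0 < q j)
    {x : Fin α → ℝ} (hx : ∀ i, 0 < x i) (hmin : IsLocalMin (Phi F p q) x) :
    ∀ i, Tmap F p q x i = x i := by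
  classical
  intro i
  set t0 := x i with ht0def
  have ht0 : 0 < t0 := hx i
  set A : Fin β → ℝ := fun j => ∑ k ∈ univ.erase i, F k j * (x k)⁻¹ * p k with hA
  set c : Fin β → ℝ := fun j => F i j * p i with hcdef
  set B : ℝ := ∑ k ∈ univ.erase i, p k * Real.log (x k) with hB
  have hSu : ∀ (t : ℝ) (j), Smap F p (Function.update x i t) j = c j * t⁻¹ + A j := by
    intro t j
    rw [Smap, ← Finset.add_sum_erase _ _ (mem_univ i)]
    congr 1
    · rw [Function.update_self]; simp only [hcdef]; ring
    · exact Finset.sum_congr rfl fun k hk => by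
        rw [Function.update_of_ne (Finset.ne_of_mem_erase hk)]
  have hSpos : ∀ j, 0 < c j * t0⁻¹ + A j := by
    intro j
    have := Smap_pos hF hp hx j
    rwa [show x = Function.update x i t0 from (Function.update_eq_self i x).symm,
      hSu t0 j] at this
  have hSx : ∀ j, Smap F p x j = c j * t0⁻¹ + A j := by
    intro j
    conv_lhs => rw [show x = Function.update x i t0 from (Function.update_eq_self i x).symm]
    exact hSu t0 j
  have hupd : ∀ t : ℝ, Phi F p q (Function.update x i t)
      = (∑ j, q j * Real.log (c j * t⁻¹ + A j)) + (p i * Real.log t + B) := by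
    intro t
    have h2 : ∑ k, p k * Real.log (Function.update x i t k)
        = p i * Real.log t + B := by
      rw [← Finset.add_sum_erase _ _ (mem_univ i), Function.update_self]
      congr 1
      exact Finset.sum_congr rfl fun k hk => by
        rw [Function.update_of_ne (Finset.ne_of_mem_erase hk)]
    simp only [Phi, h2]
    congr 1
    exact Finset.sum_congr rfl fun j _ => by rw [hSu]
  -- local minimum of the one-variable function
  have hloc : IsLocalMin (fun t => Phi F p q (Function.update x i t)) t0 := by
    have hcont : ContinuousAt (fun t : ℝ => Function.update x i t) t0 :=
      (continuous_const.update i continuous_id).continuousAt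
    have hgb : Function.update x i t0 = x := Function.update_eq_self i x
    have htd : Filter.Tendsto (fun t : ℝ => Function.update x i t) (𝓝 t0) (𝓝 x) := by
      simpa [ContinuousAt, hgb] using hcont
    have h2 : IsMinFilter (Phi F p q ∘ fun t : ℝ => Function.update x i t) (𝓝 t0) t0 := by
      refine IsMinFilter.comp_tendsto ?_ htd
      show IsMinFilter (Phi F p q) (𝓝 x) (Function.update x i t0)
      rw [hgb]; exact hmin
    exact h2
  -- derivative
  have hderiv : HasDerivAt (fun t => Phi F p q (Function.update x i t))
      ((∑ j, q j * (c j * -((t0 : ℝ) ^ 2)⁻¹ / (c j * t0⁻¹ + A j))) + p i * t0⁻¹) t0 := by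
    have heq : (fun t => Phi F p q (Function.update x i t))
        = fun t => (∑ j, q j * Real.log (c j * t⁻¹ + A j)) + (p i * Real.log t + B) :=
      funext hupd
    rw [heq]
    refine HasDerivAt.add ?_ ?_
    · refine HasDerivAt.fun_sum fun j _ => ?_
      refine HasDerivAt.const_mul _ ?_
      refine HasDerivAt.log ?_ (hSpos j).ne'
      exact ((hasDerivAt_inv ht0.ne').const_mul (c j)).add_const (A j)
    · exact ((Real.hasDerivAt_log ht0.ne').const_mul (p i)).add_const B
  have hD : (∑ j, q j * (c j * -((t0 : ℝ) ^ 2)⁻¹ / (c j * t0⁻¹ + A j))) + p i * t0⁻¹ = 0 := by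
    rw [← hderiv.deriv]; exact hloc.deriv_eq_zero
  -- algebra
  have key : ∑ j, q j * (c j * -((t0 : ℝ) ^ 2)⁻¹ / (c j * t0⁻¹ + A j))
      = -((∑ j, F i j * (Smap F p x j)⁻¹ * q j) * (p i * ((t0 : ℝ) ^ 2)⁻¹)) := by
    rw [Finset.sum_mul, ← Finset.sum_neg_distrib]
    refine Finset.sum_congr rfl fun j _ => ?_
    rw [hSx j, hcdef]
    rw [div_eq_mul_inv]
    ring
  rw [key] at hD
  have hTsum : (∑ j, F i j * (Smap F p x j)⁻¹ * q j) * (p i * ((t0 : ℝ) ^ 2)⁻¹)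
      = t0 * (p i * ((t0 : ℝ) ^ 2)⁻¹) := by
    have h1 : t0 * (p i * ((t0 : ℝ) ^ 2)⁻¹) = p i * t0⁻¹ := by
      field_simp
    linarith
  have hC : (p i * ((t0 : ℝ) ^ 2)⁻¹) ≠ 0 := by
    have := hp i; positivity
  have := mul_right_cancel₀ hC hTsum
  simpa [Tmap] using this

/-- Uniqueness up to scaling. -/
lemma Tmap_fixed_unique (hF : ∀ i j, 0 < F i j) (hp : ∀ i, 0 < p i) (hq : ∀ j, 0 < q j)
    {x z : Fin α → ℝ} (hx : ∀ i, 0 < x i) (hz : ∀ i, 0 < z i)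
    (hfx : ∀ i, Tmap F p q x i = x i) (hfz : ∀ i, Tmap F p q z i = z i) :
    ∃ c : ℝ, 0 < c ∧ z = fun i => c * x i := by
  classical
  obtain ⟨i0, -, hi0⟩ := Finset.exists_max_image (univ : Finset (Fin α))
    (fun i => z i / x i) univ_nonempty
  set c := z i0 / x i0 with hcdef
  have hcpos : 0 < c := div_pos (hz i0) (hx i0)
  refine ⟨c, hcpos, ?_⟩
  have hle : ∀ i, z i ≤ c * x i := by
    intro i
    have h1 : z i / x i ≤ c := hi0 i (mem_univ i)
    calc z i = z i / x i * x i := by rw [div_mul_cancel₀ _ (hx i).ne']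
      _ ≤ c * x i := mul_le_mul_of_nonneg_right h1 (hx i).le
  have hzi0 : z i0 = c * x i0 := by
    rw [hcdef, div_mul_eq_mul_div, mul_div_assoc, div_self (hx i0).ne', mul_one]
  have hSle : ∀ j, c⁻¹ * Smap F p x j ≤ Smap F p z j := by
    intro j
    rw [Smap, Smap, Finset.mul_sum]
    refine Finset.sum_le_sum fun i _ => ?_
    have h1 : (c * x i)⁻¹ ≤ (z i)⁻¹ := inv_anti₀ (hz i) (hle i)
    calc c⁻¹ * (F i j * (x i)⁻¹ * p i) = F i j * (c * x i)⁻¹ * p i := by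
          rw [mul_inv]; ring
      _ ≤ F i j * (z i)⁻¹ * p i :=
          mul_le_mul_of_nonneg_right (mul_le_mul_of_nonneg_left h1 (hF i j).le) (hp i).le
  have hSpx := fun j => Smap_pos hF hp hx j
  have hSpz := fun j => Smap_pos hF hp hz j
  have hterm : ∀ i j, F i j * (Smap F p z j)⁻¹ * q j
      ≤ c * (F i j * (Smap F p x j)⁻¹ * q j) := by
    intro i j
    have h2 : (Smap F p z j)⁻¹ ≤ (c⁻¹ * Smap F p x j)⁻¹ :=
      inv_anti₀ (by have := hSpx j; positivity) (hSle j)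
    have h3 : (c⁻¹ * Smap F p x j)⁻¹ = c * (Smap F p x j)⁻¹ := by
      rw [mul_inv, inv_inv]
    calc F i j * (Smap F p z j)⁻¹ * q j
        ≤ F i j * (c * (Smap F p x j)⁻¹) * q j := by
          rw [← h3]
          exact mul_le_mul_of_nonneg_right
            (mul_le_mul_of_nonneg_left h2 (hF i j).le) (hq j).le
      _ = c * (F i j * (Smap F p x j)⁻¹ * q j) := by ring
  have hsum_eq : ∑ j, F i0 j * (Smap F p z j)⁻¹ * q j
      = ∑ j, c * (F i0 j * (Smap F p x j)⁻¹ * q j) := by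
    have h1 : (∑ j, F i0 j * (Smap F p z j)⁻¹ * q j) = z i0 := hfz i0
    have h2 : (∑ j, F i0 j * (Smap F p x j)⁻¹ * q j) = x i0 := hfx i0
    rw [h1, ← Finset.mul_sum, h2, hzi0]
  have heq_terms := (Finset.sum_eq_sum_iff_of_le (fun j _ => hterm i0 j)).mp hsum_eq
  have hSeq : ∀ j, Smap F p z j = c⁻¹ * Smap F p x j := by
    intro j
    have h1 := heq_terms j (mem_univ j)
    have hFne := (hF i0 j).ne'
    have hqne := (hq j).ne'
    have h5 : (Smap F p z j)⁻¹ * (F i0 j * q j)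
        = (c * (Smap F p x j)⁻¹) * (F i0 j * q j) := by linear_combination h1
    have h4 : (Smap F p z j)⁻¹ = c * (Smap F p x j)⁻¹ :=
      mul_right_cancel₀ (mul_ne_zero hFne hqne) h5
    rw [← inv_inv (Smap F p z j), h4, mul_inv, inv_inv]
  -- conclude z = c * x using column j0 = 0
  set j0 : Fin β := 0
  have hle' : ∀ i, F i j0 * (c * x i)⁻¹ * p i ≤ F i j0 * (z i)⁻¹ * p i := by
    intro i
    have h1 : (c * x i)⁻¹ ≤ (z i)⁻¹ := inv_anti₀ (hz i) (hle i)
    exact mul_le_mul_of_nonneg_right (mul_le_mul_of_nonneg_left h1 (hF i j0).le) (hp i).le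
  have hsums : ∑ i, F i j0 * (c * x i)⁻¹ * p i = ∑ i, F i j0 * (z i)⁻¹ * p i := by
    have h1 : (∑ i, F i j0 * (z i)⁻¹ * p i) = Smap F p z j0 := rfl
    rw [h1, hSeq j0, Smap, Finset.mul_sum]
    refine Finset.sum_congr rfl fun i _ => ?_
    rw [mul_inv]; ring
  have heq2 := (Finset.sum_eq_sum_iff_of_le (fun i _ => hle' i)).mp hsums
  funext i
  have h1 := heq2 i (mem_univ i)
  have hFne := (hF i j0).ne'
  have hpne := (hp i).ne'
  have h5 : (c * x i)⁻¹ * (F i j0 * p i) = (z i)⁻¹ * (F i j0 * p i) := by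
    linear_combination h1
  have h4 : (c * x i)⁻¹ = (z i)⁻¹ := mul_right_cancel₀ (mul_ne_zero hFne hpne) h5
  exact (inv_injective h4).symm

/-- Lower bound A: control via the minimum coordinate. -/
lemma Phi_boundA (hF : ∀ i j, 0 < F i j) (hp : ∀ i, 0 < p i) (hp1 : ∑ i, p i = 1)
    (hq : ∀ j, 0 < q j) (hq1 : ∑ j, q j = 1)
    {Fm δ : ℝ} (hFmpos : 0 < Fm) (hFmle : ∀ i j, Fm ≤ F i j)
    (hδpos : 0 < δ) (hδle : ∀ i, δ ≤ p i)
    {x : Fin α → ℝ} (hx : ∀ i, 0 < x i) (hx0 : x 0 = 1)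
    {m : Fin α} (hm : ∀ i, x m ≤ x i) :
    Real.log (Fm * δ) - p 0 * Real.log (x m) ≤ Phi F p q x := by
  classical
  have hxm : 0 < x m := hx m
  have hlog : ∀ j, Real.log (Fm * δ) - Real.log (x m) ≤ Real.log (Smap F p x j) := by
    intro j
    have h1 : Fm * δ / x m ≤ F m j * (x m)⁻¹ * p m := by
      rw [div_eq_mul_inv]
      calc Fm * δ * (x m)⁻¹ = Fm * (x m)⁻¹ * δ := by ring
        _ ≤ F m j * (x m)⁻¹ * p m := by
            have h2 := hFmle m j; have h3 := hδle m
            have h4 : (0:ℝ) ≤ (x m)⁻¹ := by positivity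
            apply mul_le_mul (mul_le_mul_of_nonneg_right h2 h4) h3 hδpos.le
            have := hF m j; have := hx m
            positivity
    have h2 : F m j * (x m)⁻¹ * p m ≤ Smap F p x j := by
      refine Finset.single_le_sum (f := fun i => F i j * (x i)⁻¹ * p i)
        (fun i _ => ?_) (mem_univ m)
      have := hF i j; have := hx i; have := hp i; positivity
    calc Real.log (Fm * δ) - Real.log (x m) = Real.log (Fm * δ / x m) := by
          rw [Real.log_div (by positivity) hxm.ne']
      _ ≤ Real.log (Smap F p x j) :=
          Real.log_le_log (by positivity) (h1.trans h2)
  have h1 : Real.log (Fm * δ) - Real.log (x m) ≤ ∑ j, q j * Real.log (Smap F p x j) := by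
    calc Real.log (Fm * δ) - Real.log (x m)
        = ∑ j, q j * (Real.log (Fm * δ) - Real.log (x m)) := by
          rw [← Finset.sum_mul, hq1, one_mul]
      _ ≤ ∑ j, q j * Real.log (Smap F p x j) :=
          Finset.sum_le_sum fun j _ => mul_le_mul_of_nonneg_left (hlog j) (hq j).le
  have hsum0 : ∑ i ∈ univ.erase 0, p i = 1 - p 0 := by
    have h := Finset.add_sum_erase univ p (mem_univ (0 : Fin α))
    rw [hp1] at h; linarith
  have h2 : (1 - p 0) * Real.log (x m) ≤ ∑ i, p i * Real.log (x i) := by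
    rw [← Finset.add_sum_erase univ (fun i => p i * Real.log (x i)) (mem_univ (0 : Fin α)),
      hx0, Real.log_one, mul_zero, zero_add]
    calc (1 - p 0) * Real.log (x m) = ∑ i ∈ univ.erase 0, p i * Real.log (x m) := by
          rw [← Finset.sum_mul, hsum0]
      _ ≤ ∑ i ∈ univ.erase 0, p i * Real.log (x i) :=
          Finset.sum_le_sum fun i _ =>
            mul_le_mul_of_nonneg_left (Real.log_le_log hxm (hm i)) (hp i).le
  have hΦ : Phi F p q x = (∑ j, q j * Real.log (Smap F p x j)) + ∑ i, p i * Real.log (x i) := rfl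
  nlinarith [h1, h2]

/-- Lower bound B: control via the maximum coordinate. -/
lemma Phi_boundB (hF : ∀ i j, 0 < F i j) (hp : ∀ i, 0 < p i) (hp1 : ∑ i, p i = 1)
    (hq : ∀ j, 0 < q j) (hq1 : ∑ j, q j = 1)
    {Fm δ : ℝ} (hFmpos : 0 < Fm) (hFmle : ∀ i j, Fm ≤ F i j)
    (hδpos : 0 < δ) (hδle : ∀ i, δ ≤ p i)
    {x : Fin α → ℝ} (hx : ∀ i, 0 < x i) (hx0 : x 0 = 1)
    {m M : Fin α} (hm : ∀ i, x m ≤ x i) (hM : ∀ i, x i ≤ x M) :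
    Real.log (Fm * δ) + Real.log (x m) + δ * Real.log (x M) ≤ Phi F p q x := by
  classical
  have hxm : 0 < x m := hx m
  have hxm1 : x m ≤ 1 := hx0 ▸ hm 0
  have hxM1 : 1 ≤ x M := hx0 ▸ hM 0
  have hlog : ∀ j, Real.log (Fm * δ) ≤ Real.log (Smap F p x j) := by
    intro j
    have h1 : Fm * δ ≤ F 0 j * (x 0)⁻¹ * p 0 := by
      rw [hx0, inv_one, mul_one]
      have h2 := hFmle 0 j; have h3 := hδle 0
      exact mul_le_mul h2 h3 hδpos.le (hF 0 j).le
    have h2 : F 0 j * (x 0)⁻¹ * p 0 ≤ Smap F p x j := by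
      refine Finset.single_le_sum (f := fun i => F i j * (x i)⁻¹ * p i)
        (fun i _ => ?_) (mem_univ 0)
      have := hF i j; have := hx i; have := hp i; positivity
    exact Real.log_le_log (by positivity) (h1.trans h2)
  have h1 : Real.log (Fm * δ) ≤ ∑ j, q j * Real.log (Smap F p x j) := by
    calc Real.log (Fm * δ) = ∑ j, q j * Real.log (Fm * δ) := by
          rw [← Finset.sum_mul, hq1, one_mul]
      _ ≤ ∑ j, q j * Real.log (Smap F p x j) :=
          Finset.sum_le_sum fun j _ => mul_le_mul_of_nonneg_left (hlog j) (hq j).le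
  have hlxm : Real.log (x m) ≤ 0 := Real.log_nonpos hxm.le hxm1
  have hlxM : 0 ≤ Real.log (x M) := Real.log_nonneg hxM1
  have hsumM : ∑ i ∈ univ.erase M, p i = 1 - p M := by
    have h := Finset.add_sum_erase univ p (mem_univ M)
    rw [hp1] at h; linarith
  have h2 : Real.log (x m) + δ * Real.log (x M) ≤ ∑ i, p i * Real.log (x i) := by
    rw [← Finset.add_sum_erase univ (fun i => p i * Real.log (x i)) (mem_univ M)]
    have h3 : δ * Real.log (x M) ≤ p M * Real.log (x M) :=
      mul_le_mul_of_nonneg_right (hδle M) hlxM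
    have h4 : Real.log (x m) ≤ ∑ i ∈ univ.erase M, p i * Real.log (x i) := by
      calc Real.log (x m) = 1 * Real.log (x m) := (one_mul _).symm
        _ ≤ (1 - p M) * Real.log (x m) := by
            have := hp M
            have h5 : (1 : ℝ) - p M ≤ 1 := by linarith
            exact mul_le_mul_of_nonpos_right h5 hlxm
        _ = ∑ i ∈ univ.erase M, p i * Real.log (x m) := by rw [← Finset.sum_mul, hsumM]
        _ ≤ ∑ i ∈ univ.erase M, p i * Real.log (x i) :=
            Finset.sum_le_sum fun i _ =>
              mul_le_mul_of_nonneg_left (Real.log_le_log hxm (hm i)) (hp i).le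
    linarith
  have hΦ : Phi F p q x = (∑ j, q j * Real.log (Smap F p x j)) + ∑ i, p i * Real.log (x i) := rfl
  nlinarith [h1, h2]

/-- `Phi` is continuous on a compact box inside the positive cone. -/
lemma Phi_continuousOn (hF : ∀ i j, 0 < F i j) (hp : ∀ i, 0 < p i)
    {a b : ℝ} (ha : 0 < a) :
    ContinuousOn (Phi F p q)
      (Set.Icc (fun _ => a) ((fun _ => b) : Fin α → ℝ)) := by
  classical
  set K := Set.Icc (fun _ => a) ((fun _ => b) : Fin α → ℝ) with hK
  have hpos : ∀ x ∈ K, ∀ i, 0 < x i := by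
    intro x hx i
    exact lt_of_lt_of_le ha (hx.1 i)
  have hSc : ∀ j, ContinuousOn (fun x : Fin α → ℝ => Smap F p x j) K := by
    intro j
    refine continuousOn_finset_sum _ fun i _ => ?_
    exact (continuousOn_const.mul (((continuous_apply i).continuousOn).inv₀
      fun x hx => (hpos x hx i).ne')).mul continuousOn_const
  refine ContinuousOn.add ?_ ?_
  · refine continuousOn_finset_sum _ fun j _ => ?_
    exact continuousOn_const.mul ((hSc j).log
      fun x hx => (Smap_pos hF hp (hpos x hx) j).ne')
  · refine continuousOn_finset_sum _ fun i _ => ?_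
    exact continuousOn_const.mul (((continuous_apply i).continuousOn).log
      fun x hx => (hpos x hx i).ne')

/-- Existence of a positive fixed point of `Tmap`. -/
lemma exists_Tmap_fixed (hF : ∀ i j, 0 < F i j) (hp : ∀ i, 0 < p i) (hp1 : ∑ i, p i = 1)
    (hq : ∀ j, 0 < q j) (hq1 : ∑ j, q j = 1) :
    ∃ x : Fin α → ℝ, (∀ i, 0 < x i) ∧ ∀ i, Tmap F p q x i = x i := by
  classical
  obtain ⟨pr, -, hFm⟩ := Finset.exists_min_image (univ : Finset (Fin α × Fin β))
    (fun pr => F pr.1 pr.2) univ_nonempty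
  set Fm := F pr.1 pr.2 with hFmdef
  have hFmpos : 0 < Fm := hF _ _
  have hFmle : ∀ i j, Fm ≤ F i j := fun i j => hFm (i, j) (mem_univ _)
  obtain ⟨m0, -, hpm⟩ := Finset.exists_min_image (univ : Finset (Fin α)) p univ_nonempty
  set δ := p m0 with hδdef
  have hδpos : 0 < δ := hp m0
  have hδle : ∀ i, δ ≤ p i := fun i => hpm i (mem_univ i)
  set L1 := Real.log (Fm * δ) with hL1
  set one : Fin α → ℝ := fun _ => (1:ℝ) with honedef
  have hone : ∀ i, 0 < one i := fun _ => one_pos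
  set Φ1 := Phi F p q one with hΦ1def
  -- choose the box
  set a : ℝ := min (1/2 : ℝ) (Real.exp ((L1 - Φ1 - 1) / p 0)) with hadef
  have hapos : 0 < a := lt_min (by norm_num) (Real.exp_pos _)
  have ha1 : a ≤ 1 := le_trans (min_le_left _ _) (by norm_num)
  have haL : Φ1 + 1 ≤ L1 - p 0 * Real.log a := by
    have h1 : Real.log a ≤ (L1 - Φ1 - 1) / p 0 :=
      (Real.log_le_iff_le_exp hapos).mpr (min_le_right _ _)
    have h2 : p 0 * Real.log a ≤ p 0 * ((L1 - Φ1 - 1) / p 0) :=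
      mul_le_mul_of_nonneg_left h1 (hp 0).le
    rw [mul_div_cancel₀ _ (hp 0).ne'] at h2
    linarith
  set b : ℝ := max 1 (Real.exp ((Φ1 + 1 - L1 - Real.log a) / δ)) with hbdef
  have hb1 : (1:ℝ) ≤ b := le_max_left _ _
  have hbpos : 0 < b := lt_of_lt_of_le one_pos hb1
  have hbL : Φ1 + 1 ≤ L1 + Real.log a + δ * Real.log b := by
    have h1 : (Φ1 + 1 - L1 - Real.log a) / δ ≤ Real.log b :=
      (Real.le_log_iff_exp_le hbpos).mpr (le_max_right _ _)
    have h2 : δ * ((Φ1 + 1 - L1 - Real.log a) / δ) ≤ δ * Real.log b :=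
      mul_le_mul_of_nonneg_left h1 hδpos.le
    rw [mul_div_cancel₀ _ hδpos.ne'] at h2
    linarith
  have hab : a ≤ b := le_trans ha1 hb1
  set K := Set.Icc (fun _ => a) ((fun _ => b) : Fin α → ℝ) with hKdef
  have h1K : one ∈ K := ⟨fun i => ha1, fun i => hb1⟩
  have hKpos : ∀ x ∈ K, ∀ i, 0 < x i := fun x hx i => lt_of_lt_of_le hapos (hx.1 i)
  obtain ⟨xs, hxsK, hxsmin⟩ := (isCompact_Icc).exists_isMinOn ⟨one, h1K⟩
    (Phi_continuousOn hF hp hapos)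
  have hxspos : ∀ i, 0 < xs i := hKpos xs hxsK
  have hΦ1le : Phi F p q xs ≤ Φ1 := hxsmin h1K
  -- xs is a global minimum on the positive cone
  have hglobal : ∀ z : Fin α → ℝ, (∀ i, 0 < z i) → Phi F p q xs ≤ Phi F p q z := by
    intro z hz
    set w : Fin α → ℝ := fun i => (z 0)⁻¹ * z i with hwdef
    have hwpos : ∀ i, 0 < w i := fun i => mul_pos (inv_pos.mpr (hz 0)) (hz i)
    have hw0 : w 0 = 1 := inv_mul_cancel₀ (hz 0).ne'
    have hΦw : Phi F p q w = Phi F p q z :=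
      Phi_smul hF hp hp1 hq hq1 hz (inv_pos.mpr (hz 0))
    rw [← hΦw]
    obtain ⟨m, -, hm'⟩ := Finset.exists_min_image (univ : Finset (Fin α)) w univ_nonempty
    obtain ⟨M, -, hM'⟩ := Finset.exists_max_image (univ : Finset (Fin α)) w univ_nonempty
    have hm : ∀ i, w m ≤ w i := fun i => hm' i (mem_univ i)
    have hM : ∀ i, w i ≤ w M := fun i => hM' i (mem_univ i)
    by_cases hcase : w ∈ K
    · exact hxsmin hcase
    · by_cases hlow : ∀ i, a ≤ w i
      · have hhigh : ∃ i, b < w i := by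
          by_contra h
          push_neg at h
          exact hcase ⟨fun i => hlow i, fun i => h i⟩
        obtain ⟨i, hi⟩ := hhigh
        have hbM : b < w M := lt_of_lt_of_le hi (hM i)
        have h2 := Phi_boundB hF hp hp1 hq hq1 hFmpos hFmle hδpos hδle hwpos hw0 hm hM
        have h3 : Real.log a ≤ Real.log (w m) := Real.log_le_log hapos (hlow m)
        have h4 : Real.log b < Real.log (w M) := Real.log_lt_log hbpos hbM
        have h5 : δ * Real.log b < δ * Real.log (w M) :=
          mul_lt_mul_of_pos_left h4 hδpos
        linarith
      · push_neg at hlow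
        obtain ⟨i, hi⟩ := hlow
        have hma : w m < a := lt_of_le_of_lt (hm i) hi
        have h2 := Phi_boundA hF hp hp1 hq hq1 hFmpos hFmle hδpos hδle hwpos hw0 hm
        have h3 : Real.log (w m) < Real.log a := Real.log_lt_log (hwpos m) hma
        have h4 : p 0 * Real.log (w m) < p 0 * Real.log a :=
          mul_lt_mul_of_pos_left h3 (hp 0)
        linarith
  -- xs is a local minimum
  have hU : IsOpen {y : Fin α → ℝ | ∀ i, 0 < y i} := by
    have h : {y : Fin α → ℝ | ∀ i, 0 < y i}
        = ⋂ i, (fun y : Fin α → ℝ => y i) ⁻¹' Set.Ioi 0 := by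
      ext y; simp [Set.mem_iInter]
    rw [h]
    exact isOpen_iInter_of_finite fun i => (continuous_apply i).isOpen_preimage _ isOpen_Ioi
  have hlocmin : IsLocalMin (Phi F p q) xs := by
    refine Filter.eventually_of_mem (hU.mem_nhds hxspos) fun z hz => hglobal z hz
  exact ⟨xs, hxspos, Tmap_fixed_of_localMin hF hp hq hxspos hlocmin⟩

end Aux

/-- The map `T = K₁ ∘ I₂ ∘ K₂ ∘ I₁` has a fixed point in the positive cone,
unique up to multiplication by a positive scalar. -/
theorem T_fixed_point_unique_up_to_scaling {α β : ℕ} [NeZero α] [NeZero β]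
    (F : Fin α → Fin β → ℝ) (hF : ∀ i j, 0 < F i j)
    (p : Fin α → ℝ) (hp : ∀ i, 0 < p i) (hp1 : ∑ i, p i = 1)
    (q : Fin β → ℝ) (hq : ∀ j, 0 < q j) (hq1 : ∑ j, q j = 1)
    (I₁ : (Fin α → ℝ) → (Fin α → ℝ)) (hI₁ : ∀ x i, I₁ x i = 1 / x i)
    (K₂ : (Fin α → ℝ) → (Fin β → ℝ)) (hK₂ : ∀ x j, K₂ x j = ∑ i, F i j * x i * p i)
    (I₂ : (Fin β → ℝ) → (Fin β → ℝ)) (hI₂ : ∀ y j, I₂ y j = 1 / y j)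
    (K₁ : (Fin β → ℝ) → (Fin α → ℝ)) (hK₁ : ∀ y i, K₁ y i = ∑ j, F i j * y j * q j)
    (T : (Fin α → ℝ) → (Fin α → ℝ)) (hT : T = K₁ ∘ I₂ ∘ K₂ ∘ I₁) :
    ∃ x : Fin α → ℝ, (∀ i, 0 < x i) ∧ T x = x ∧
      ∀ z : Fin α → ℝ, (∀ i, 0 < z i) → T z = z →
        ∃ c : ℝ, 0 < c ∧ z = fun i => c * x i := by
  have hT' : ∀ x i, T x i = Tmap F p q x i := by
    intro x i
    simp only [hT, Function.comp_apply, hK₁, hI₂, hK₂, hI₁, Tmap, Smap, one_div]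
  obtain ⟨x, hxpos, hxfix⟩ := exists_Tmap_fixed hF hp hp1 hq hq1
  refine ⟨x, hxpos, ?_, ?_⟩
  · funext i; rw [hT', hxfix]
  · intro z hzpos hzfix
    have hzfix' : ∀ i, Tmap F p q z i = z i := fun i => by rw [← hT', hzfix]
    exact Tmap_fixed_unique hF hp hq hxpos hzpos hxfix hzfix'
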